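/- Let F : ℝⁿ × U → ℝ with U a compact set, and suppose that for fixed parameters the minimizer π = argmin_{u∈U} F(χ, u) is unique and F(·, u) is differentiable at χ for each u with continuous joint dependence. Then the value function φ(χ) = min_{u∈U} F(χ, u) is differentiable at χ with gradient φ'(χ) = F_χ(χ, π). -/

import Mathlib

/-- Danskin's theorem with a unique minimizer: let `U` be a compact metric space, let
`F : ℝⁿ × U → ℝ` be continuous, with `F (·, u)` differentiable (with derivative `D x u`
depending continuously on `(x, u)`), and suppose the minimizer `π` of `u ↦ F χ u` is
unique.  Then the value function `φ(χ) = min_{u ∈ U} F χ u` is differentiable at `χ` with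
gradient `F_χ(χ, π) = D χ π`. -/
theorem stmt12 {n : ℕ} (U : Type*) [MetricSpace U] [CompactSpace U] [Nonempty U]
    (F : EuclideanSpace ℝ (Fin n) → U → ℝ)
    (D : EuclideanSpace ℝ (Fin n) → U → (EuclideanSpace ℝ (Fin n) →L[ℝ] ℝ))
    (hF : Continuous fun p : EuclideanSpace ℝ (Fin n) × U => F p.1 p.2)
    (hD : ∀ x u, HasFDerivAt (fun x => F x u) (D x u) x)
    (hDcont : Continuous fun p : EuclideanSpace ℝ (Fin n) × U => D p.1 p.2)
    (χ : EuclideanSpace ℝ (Fin n)) (π : U)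
    (hmin : ∀ u, F χ π ≤ F χ u)
    (huniq : ∀ u, F χ u = F χ π → u = π) :
    HasFDerivAt (fun x => ⨅ u : U, F x u) (D χ π) χ := by
  -- a minimizer for each x
  have hex : ∀ x : EuclideanSpace ℝ (Fin n), ∃ u : U, ∀ v, F x u ≤ F x v := by
    intro x
    obtain ⟨u, -, hu⟩ := isCompact_univ.exists_isMinOn Set.univ_nonempty
      ((hF.comp (Continuous.prodMk_right x)).continuousOn (s := Set.univ))
    exact ⟨u, fun v => hu (Set.mem_univ v)⟩
  choose m hm using hex
  have hbdd : ∀ x, BddBelow (Set.range fun u => F x u) := by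
    intro x
    exact ⟨F x (m x), by rintro y ⟨u, rfl⟩; exact hm x u⟩
  have hφ : ∀ x, (⨅ u : U, F x u) = F x (m x) := fun x =>
    le_antisymm (ciInf_le (hbdd x) (m x)) (le_ciInf (hm x))
  have hφχ : (⨅ u : U, F χ u) = F χ π :=
    le_antisymm (ciInf_le (hbdd χ) π) (le_ciInf hmin)
  rw [hasFDerivAt_iff_isLittleO, Asymptotics.isLittleO_iff]
  intro ε hε
  -- joint continuity of D near (χ, π)
  obtain ⟨δ, hδpos, hδ⟩ : ∃ δ > 0, ∀ ξ u, dist ξ χ < δ → dist u π < δ →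
      ‖D ξ u - D χ π‖ ≤ ε := by
    have h := hDcont.continuousAt (x := (χ, π))
    rw [Metric.continuousAt_iff] at h
    obtain ⟨δ, hδpos, hδ⟩ := h ε hε
    refine ⟨δ, hδpos, fun ξ u h1 h2 => ?_⟩
    have := hδ (x := (ξ, u)) (by rw [Prod.dist_eq]; exact max_lt h1 h2)
    rw [dist_eq_norm] at this
    exact this.le
  -- minimizers converge to π
  have E3 : ∀ᶠ x in nhds χ, dist (m x) π < δ := by
    have hK : IsCompact {u : U | δ ≤ dist u π} := isCompact_univ.of_isClosed_subset
      (isClosed_le continuous_const (continuous_id.dist continuous_const))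
      (Set.subset_univ _)
    have hforall : ∀ᶠ x in nhds χ, ∀ u ∈ {u : U | δ ≤ dist u π}, F x π < F x u := by
      apply hK.eventually_forall_of_forall_eventually
      intro u hu
      have hune : u ≠ π := by
        intro h; subst h; simp only [Set.mem_setOf_eq, dist_self] at hu; linarith
      have hlt : F χ π < F χ u :=
        lt_of_le_of_ne (hmin u) fun h => hune (huniq u h.symm)
      have hopen : IsOpen {z : EuclideanSpace ℝ (Fin n) × U | F z.1 π < F z.1 z.2} :=
        isOpen_lt (hF.comp (continuous_fst.prodMk continuous_const)) hF
      exact hopen.mem_nhds hlt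
    filter_upwards [hforall] with x hx
    by_contra h
    exact absurd (hm x π) (not_le.2 (hx (m x) (not_lt.1 h)))
  -- the derivative of F · π
  have E1 : ∀ᶠ x in nhds χ, ‖F x π - F χ π - D χ π (x - χ)‖ ≤ ε * ‖x - χ‖ := by
    exact (Asymptotics.isLittleO_iff.1 (hD χ π).isLittleO) hε
  filter_upwards [E1, E3, Metric.ball_mem_nhds χ hδpos] with x h1 h3 h4
  rw [hφ x, hφχ]
  -- mean value bound for F · (m x)
  have hmvt : ‖F x (m x) - F χ (m x) - D χ π (x - χ)‖ ≤ ε * ‖x - χ‖ := by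
    apply Convex.norm_image_sub_le_of_norm_hasFDerivWithin_le'
      (f := fun z => F z (m x)) (f' := fun z => D z (m x)) (s := Metric.ball χ δ)
      (fun ξ hξ => (hD ξ (m x)).hasFDerivWithinAt)
      (fun ξ hξ => hδ ξ (m x) (Metric.mem_ball.1 hξ) h3)
      (convex_ball χ δ) (Metric.mem_ball_self hδpos) h4
  rw [Real.norm_eq_abs, abs_le]
  rw [Real.norm_eq_abs, abs_le] at h1 hmvt
  have h5 : F x (m x) ≤ F x π := hm x π
  have h6 : F χ π ≤ F χ (m x) := hmin (m x)
  constructor <;> linarith [h1.1, h1.2, hmvt.1, hmvt.2]
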